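/- Let p > 2, Λ > 0, and define the Talenti bubbles V_t(s) := β·(cosh(α(s−t)))^{−2/(p−2)} with α := ((p−2)/2)·√Λ and β := (pΛ/2)^{1/(p−2)}. There exist constants c > 0 and C > 0, depending only on p and Λ, such that for all t₁, t₂ ∈ ℝ one has c·(|t₁−t₂|+1)·e^{−(p√Λ/2)·|t₁−t₂|} ≤ ∫_ℝ V_{t₁}(s)^{p/2} V_{t₂}(s)^{p/2} ds ≤ C·(|t₁−t₂|+1)·e^{−(p√Λ/2)·|t₁−t₂|}. -/

import Mathlib

open MeasureTheory

section Helpers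
open MeasureTheory Set Real Filter

/-- `∫ x in Ioi c, exp (-(a*x)) = exp (-(a*c))/a` for `a > 0`. -/
lemma my_integral_exp_neg_mul_Ioi {a : ℝ} (ha : 0 < a) (c : ℝ) :
    ∫ x in Ioi c, Real.exp (-(a * x)) = Real.exp (-(a * c)) / a := by
  have hint : IntegrableOn (fun x : ℝ => Real.exp (-(a * x))) (Ioi c) := by
    simpa [neg_mul] using exp_neg_integrableOn_Ioi c ha
  have hderiv : ∀ x ∈ Ici c, HasDerivAt (fun x : ℝ => -Real.exp (-(a * x)) / a)
      (Real.exp (-(a * x))) x := by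
    intro x _
    have h1 : HasDerivAt (fun x : ℝ => -(a * x)) (-a) x := by
      have h := ((hasDerivAt_id x).const_mul a).neg
      rw [mul_one] at h
      exact h
    have h2 := (h1.exp.neg).div_const a
    refine h2.congr_deriv ?_
    field_simp [ha.ne']
  have htend : Tendsto (fun x : ℝ => -Real.exp (-(a * x)) / a) atTop (nhds 0) := by
    have h1 : Tendsto (fun x : ℝ => a * x) atTop atTop :=
      Tendsto.const_mul_atTop ha tendsto_id
    have h2 : Tendsto (fun x : ℝ => Real.exp (-(a * x))) atTop (nhds 0) :=
      Real.tendsto_exp_neg_atTop_nhds_zero.comp h1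
    simpa using (h2.neg).div_const a
  have := integral_Ioi_of_hasDerivAt_of_tendsto' hderiv hint htend
  rw [this]
  field_simp
  ring

/-- Integrability of `exp (a*x)` on `Iic c` for `a > 0`. -/
lemma my_integrableOn_exp_mul_Iic {a : ℝ} (ha : 0 < a) (c : ℝ) :
    IntegrableOn (fun x : ℝ => Real.exp (a * x)) (Iic c) := by
  have hint : IntegrableOn (fun x : ℝ => Real.exp (-(a * x))) (Ioi (-c)) := by
    simpa [neg_mul] using exp_neg_integrableOn_Ioi (-c) ha
  have h2 : IntegrableOn ((fun x : ℝ => Real.exp (-(a * x))) ∘ (fun x : ℝ => -x))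
      ((fun x : ℝ => -x) ⁻¹' (Ioi (-c))) := by
    exact (MeasurePreserving.integrableOn_comp_preimage (Measure.measurePreserving_neg _)
      (Homeomorph.neg ℝ).measurableEmbedding).2 hint
  have hpre : ((fun x : ℝ => -x) ⁻¹' (Ioi (-c))) = Iio c := by
    ext x; simp
  rw [hpre] at h2
  have h3 : IntegrableOn (fun x : ℝ => Real.exp (a * x)) (Iio c) := by
    exact h2.congr_fun (fun x _ => by simp [Function.comp]) measurableSet_Iio
  have : IntegrableOn (fun x : ℝ => Real.exp (a * x)) (Iio c ∪ {c}) :=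
    h3.union (by simp [integrableOn_singleton_iff])
  apply this.mono_set
  intro x hx
  rcases lt_or_eq_of_le (mem_Iic.mp hx) with h | h
  · exact Or.inl h
  · exact Or.inr (by simp [h])

/-- `∫ x in Iic c, exp (a*x) = exp (a*c)/a` for `a > 0`. -/
lemma my_integral_exp_mul_Iic {a : ℝ} (ha : 0 < a) (c : ℝ) :
    ∫ x in Iic c, Real.exp (a * x) = Real.exp (a * c) / a := by
  have hderiv : ∀ x ∈ Iic c, HasDerivAt (fun x : ℝ => Real.exp (a * x) / a)
      (Real.exp (a * x)) x := by
    intro x _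
    have h1 : HasDerivAt (fun x : ℝ => a * x) a x := by
      simpa using (hasDerivAt_id x).const_mul a
    have h2 := h1.exp.div_const a
    refine h2.congr_deriv ?_
    field_simp [ha.ne']
  have htend : Tendsto (fun x : ℝ => Real.exp (a * x) / a) atBot (nhds 0) := by
    have h1 : Tendsto (fun x : ℝ => a * x) atBot atBot :=
      Tendsto.const_mul_atBot ha tendsto_id
    have h2 : Tendsto (fun x : ℝ => Real.exp (a * x)) atBot (nhds 0) :=
      Real.tendsto_exp_atBot.comp h1
    simpa using h2.div_const a
  have := integral_Iic_of_hasDerivAt_of_tendsto' hderiv (my_integrableOn_exp_mul_Iic ha c) htend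
  rw [this]
  ring

lemma my_cosh_le_exp_abs (x : ℝ) : Real.cosh x ≤ Real.exp |x| := by
  rw [← Real.cosh_abs, Real.cosh_eq]
  have : Real.exp (-|x|) ≤ Real.exp |x| := Real.exp_le_exp.2 (by linarith [abs_nonneg x])
  linarith

lemma my_exp_abs_le_two_mul_cosh (x : ℝ) : Real.exp |x| ≤ 2 * Real.cosh x := by
  rw [← Real.cosh_abs, Real.cosh_eq]
  have := (Real.exp_pos (-|x|)).le
  linarith

lemma my_model {k t1 t2 : ℝ} (hk : 0 < k) (h : t1 ≤ t2) :
    Integrable (fun s : ℝ => Real.exp (-k * (|s - t1| + |s - t2|))) ∧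
    ∫ s : ℝ, Real.exp (-k * (|s - t1| + |s - t2|))
      = (t2 - t1 + 1/k) * Real.exp (-k * (t2 - t1)) := by
  have hk2 : 0 < 2 * k := by linarith
  set E : ℝ → ℝ := fun s => Real.exp (-k * (|s - t1| + |s - t2|)) with hE
  have hE1 : ∀ s ∈ Iic t1, E s = Real.exp (-k * (t1 + t2)) * Real.exp (2 * k * s) := by
    intro s hs
    simp only [hE]
    rw [abs_of_nonpos (by simp at hs; linarith), abs_of_nonpos (by simp at hs; linarith),
      ← Real.exp_add]
    congr 1; ring
  have hE2 : ∀ s ∈ Ioc t1 t2, E s = Real.exp (-k * (t2 - t1)) := by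
    intro s hs
    simp only [hE]
    rw [abs_of_nonneg (by simp at hs; linarith), abs_of_nonpos (by simp at hs; linarith)]
    congr 1; ring
  have hE3 : ∀ s ∈ Ioi t2, E s = Real.exp (k * (t1 + t2)) * Real.exp (-(2 * k * s)) := by
    intro s hs
    simp only [hE]
    rw [abs_of_nonneg (by simp at hs; linarith), abs_of_nonneg (by simp at hs; linarith),
      ← Real.exp_add]
    congr 1; ring
  have hInt1 : IntegrableOn E (Iic t1) := by
    have h0 : IntegrableOn (fun s : ℝ => Real.exp (-k * (t1 + t2)) * Real.exp (2 * k * s))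
        (Iic t1) := (my_integrableOn_exp_mul_Iic hk2 t1).const_mul _
    exact h0.congr_fun (fun s hs => (hE1 s hs).symm) measurableSet_Iic
  have hInt3 : IntegrableOn E (Ioi t2) := by
    have h0 : IntegrableOn (fun s : ℝ => Real.exp (k * (t1 + t2)) * Real.exp (-(2 * k * s)))
        (Ioi t2) := by
      have : IntegrableOn (fun x : ℝ => Real.exp (k * (t1 + t2)) * Real.exp (-(2 * k) * x))
          (Ioi t2) := (exp_neg_integrableOn_Ioi t2 hk2).const_mul (Real.exp (k * (t1 + t2)))
      simpa only [neg_mul] using this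
    exact h0.congr_fun (fun s hs => (hE3 s hs).symm) measurableSet_Ioi
  have hEcont : Continuous E := by
    apply Real.continuous_exp.comp
    exact (continuous_const.mul (((continuous_id.sub continuous_const).abs).add
      ((continuous_id.sub continuous_const).abs)))
  have hInt2 : IntegrableOn E (Ioc t1 t2) := hEcont.integrableOn_Ioc
  have hIntIoi : IntegrableOn E (Ioi t1) := by
    rw [← Ioc_union_Ioi_eq_Ioi h]
    exact hInt2.union hInt3
  have hInt : Integrable E := by
    rw [← integrableOn_univ, ← Set.Iic_union_Ioi (a := t1)]
    exact hInt1.union hIntIoi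
  refine ⟨hInt, ?_⟩
  have P1 : ∫ s in Iic t1, E s = Real.exp (-k * (t2 - t1)) / (2 * k) := by
    rw [setIntegral_congr_fun measurableSet_Iic hE1, MeasureTheory.integral_const_mul,
      my_integral_exp_mul_Iic hk2]
    rw [← mul_div_assoc, ← Real.exp_add]
    congr 2; ring
  have P2 : ∫ s in Ioc t1 t2, E s = (t2 - t1) * Real.exp (-k * (t2 - t1)) := by
    rw [setIntegral_congr_fun measurableSet_Ioc hE2, setIntegral_const,
      Real.volume_real_Ioc_of_le h, smul_eq_mul]
  have P3 : ∫ s in Ioi t2, E s = Real.exp (-k * (t2 - t1)) / (2 * k) := by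
    rw [setIntegral_congr_fun measurableSet_Ioi hE3, MeasureTheory.integral_const_mul,
      my_integral_exp_neg_mul_Ioi hk2]
    rw [← mul_div_assoc, ← Real.exp_add]
    congr 2; ring
  have split1 : ∫ s, E s = (∫ s in Iic t1, E s) + ∫ s in Ioi t1, E s :=
    (intervalIntegral.integral_Iic_add_Ioi hInt1 hIntIoi).symm
  have split2 : ∫ s in Ioi t1, E s = (∫ s in Ioc t1 t2, E s) + ∫ s in Ioi t2, E s := by
    rw [← Ioc_union_Ioi_eq_Ioi h, setIntegral_union (Ioc_disjoint_Ioi le_rfl)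
      measurableSet_Ioi hInt2 hInt3]
  rw [split1, split2, P1, P2, P3]
  field_simp
  ring

lemma my_key (p Λ α β : ℝ) (hp : 2 < p) (hΛ : 0 < Λ)
    (hα : α = (p - 2) / 2 * Real.sqrt Λ) (hβ : β = (p * Λ / 2) ^ ((1 : ℝ) / (p - 2)))
    (V : ℝ → ℝ → ℝ)
    (hV : ∀ t s, V t s = β * Real.cosh (α * (s - t)) ^ (-2 / (p - 2) : ℝ))
    {t1 t2 : ℝ} (h : t1 ≤ t2) :
    β ^ p * Real.exp (-(p * Real.sqrt Λ)) *
        ((|t1 - t2| + 1) * Real.exp (-(p * Real.sqrt Λ / 2) * |t1 - t2|))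
      ≤ (∫ s : ℝ, V t1 s ^ (p / 2) * V t2 s ^ (p / 2)) ∧
    (∫ s : ℝ, V t1 s ^ (p / 2) * V t2 s ^ (p / 2))
      ≤ β ^ p * (2 ^ (p / (p - 2)) * 2 ^ (p / (p - 2))) * (1 + 1 / (p * Real.sqrt Λ / 2)) *
        ((|t1 - t2| + 1) * Real.exp (-(p * Real.sqrt Λ / 2) * |t1 - t2|)) := by
  have hp2 : (0:ℝ) < p - 2 := by linarith
  have hppos : (0:ℝ) < p := by linarith
  have hsΛ : 0 < Real.sqrt Λ := Real.sqrt_pos.2 hΛ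
  have hα0 : 0 < α := by rw [hα]; positivity
  have hβ0 : 0 < β := by
    rw [hβ]; exact Real.rpow_pos_of_pos (by positivity) _
  have hγ0 : 0 < p / (p - 2) := by positivity
  set k := p * Real.sqrt Λ / 2 with hkdef
  have hk0 : 0 < k := by rw [hkdef]; positivity
  have hαγ : α * (p / (p - 2)) = k := by
    rw [hα, hkdef]; field_simp
  set G : ℝ → ℝ := fun s => β ^ p * (Real.cosh (α * (s - t1)) ^ (-(p / (p - 2))) *
      Real.cosh (α * (s - t2)) ^ (-(p / (p - 2)))) with hGdef
  have hFG : (fun s : ℝ => V t1 s ^ (p / 2) * V t2 s ^ (p / 2)) = G := by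
    funext s
    have hc1 : (0:ℝ) ≤ Real.cosh (α * (s - t1)) := (Real.cosh_pos _).le
    have hc2 : (0:ℝ) ≤ Real.cosh (α * (s - t2)) := (Real.cosh_pos _).le
    rw [hV t1 s, hV t2 s, Real.mul_rpow hβ0.le (Real.rpow_nonneg hc1 _),
      Real.mul_rpow hβ0.le (Real.rpow_nonneg hc2 _),
      ← Real.rpow_mul hc1, ← Real.rpow_mul hc2]
    have he : (-2 / (p - 2)) * (p / 2) = -(p / (p - 2)) := by
      field_simp
    rw [he, hGdef]
    have hb2 : β ^ (p/2) * β ^ (p/2) = β ^ p := by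
      rw [← Real.rpow_add hβ0]; norm_num
    calc β ^ (p/2) * Real.cosh (α * (s - t1)) ^ (-(p / (p - 2))) *
          (β ^ (p/2) * Real.cosh (α * (s - t2)) ^ (-(p / (p - 2))))
        = (β ^ (p/2) * β ^ (p/2)) * (Real.cosh (α * (s - t1)) ^ (-(p / (p - 2))) *
            Real.cosh (α * (s - t2)) ^ (-(p / (p - 2)))) := by ring
      _ = β ^ p * (Real.cosh (α * (s - t1)) ^ (-(p / (p - 2))) *
            Real.cosh (α * (s - t2)) ^ (-(p / (p - 2)))) := by rw [hb2]
  set E : ℝ → ℝ := fun s => Real.exp (-k * (|s - t1| + |s - t2|)) with hEdef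
  -- pointwise bounds on cosh ^ (-(p/(p-2)))
  have hcb1 : ∀ x : ℝ, Real.exp (-k * |x|) ≤ Real.cosh (α * x) ^ (-(p / (p - 2))) := by
    intro x
    have h1 : Real.cosh (α * x) ≤ Real.exp (α * |x|) := by
      have := my_cosh_le_exp_abs (α * x)
      rwa [abs_mul, abs_of_pos hα0] at this
    have h2 := Real.rpow_le_rpow_of_nonpos (Real.cosh_pos (α * x)) h1
      (neg_nonpos.2 hγ0.le)
    have h3 : Real.exp (α * |x|) ^ (-(p / (p - 2))) = Real.exp (-k * |x|) := by
      rw [← Real.exp_mul]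
      congr 1
      rw [← hαγ]; ring
    rwa [h3] at h2
  have hcb2 : ∀ x : ℝ, Real.cosh (α * x) ^ (-(p / (p - 2)))
      ≤ 2 ^ (p / (p - 2)) * Real.exp (-k * |x|) := by
    intro x
    have h1 : Real.exp (α * |x|) / 2 ≤ Real.cosh (α * x) := by
      have := my_exp_abs_le_two_mul_cosh (α * x)
      rw [abs_mul, abs_of_pos hα0] at this
      linarith
    have h2 := Real.rpow_le_rpow_of_nonpos (by positivity) h1 (neg_nonpos.2 hγ0.le)
    have h3 : (Real.exp (α * |x|) / 2) ^ (-(p / (p - 2)))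
        = 2 ^ (p / (p - 2)) * Real.exp (-k * |x|) := by
      rw [Real.div_rpow (Real.exp_pos _).le (by norm_num), ← Real.exp_mul,
        Real.rpow_neg (by norm_num : (0:ℝ) ≤ 2), div_inv_eq_mul]
      have harg : α * |x| * -(p / (p - 2)) = -k * |x| := by rw [← hαγ]; ring
      rw [harg, mul_comm]
    rwa [h3] at h2
  have hEmul : ∀ s : ℝ, Real.exp (-k * |s - t1|) * Real.exp (-k * |s - t2|) = E s := by
    intro s
    rw [hEdef, ← Real.exp_add]
    congr 1; ring
  have hGlow : ∀ s : ℝ, β ^ p * E s ≤ G s := by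
    intro s
    have := mul_le_mul (hcb1 (s - t1)) (hcb1 (s - t2)) (Real.exp_pos _).le
      (Real.rpow_nonneg (Real.cosh_pos _).le _)
    rw [hEmul s] at this
    exact mul_le_mul_of_nonneg_left this (Real.rpow_nonneg hβ0.le _)
  have hGup : ∀ s : ℝ, G s ≤ (β ^ p * (2 ^ (p / (p - 2)) * 2 ^ (p / (p - 2)))) * E s := by
    intro s
    have h1 := mul_le_mul (hcb2 (s - t1)) (hcb2 (s - t2))
      (Real.rpow_nonneg (Real.cosh_pos _).le _) (by positivity)
    have h2 : (2 ^ (p / (p - 2)) * Real.exp (-k * |s - t1|)) *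
        (2 ^ (p / (p - 2)) * Real.exp (-k * |s - t2|))
        = (2 ^ (p / (p - 2)) * 2 ^ (p / (p - 2))) * E s := by
      rw [← hEmul s]; ring
    rw [h2] at h1
    calc G s = β ^ p * (Real.cosh (α * (s - t1)) ^ (-(p / (p - 2))) *
          Real.cosh (α * (s - t2)) ^ (-(p / (p - 2)))) := rfl
      _ ≤ β ^ p * ((2 ^ (p / (p - 2)) * 2 ^ (p / (p - 2))) * E s) :=
          mul_le_mul_of_nonneg_left h1 (Real.rpow_nonneg hβ0.le _)
      _ = (β ^ p * (2 ^ (p / (p - 2)) * 2 ^ (p / (p - 2)))) * E s := by ring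
  have hmodel := my_model (t1 := t1) (t2 := t2) hk0 h
  have hEint : Integrable E := hmodel.1
  have hGnonneg : ∀ s, 0 ≤ G s := fun s =>
    mul_nonneg (Real.rpow_nonneg hβ0.le _)
      (mul_nonneg (Real.rpow_nonneg (Real.cosh_pos _).le _)
        (Real.rpow_nonneg (Real.cosh_pos _).le _))
  have hA : (0:ℝ) ≤ β ^ p * (2 ^ (p / (p - 2)) * 2 ^ (p / (p - 2))) := by positivity
  have hGcont : Continuous G := by
    have c1 : Continuous (fun s : ℝ => Real.cosh (α * (s - t1)) ^ (-(p / (p - 2)))) :=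
      (Real.continuous_cosh.comp (continuous_const.mul
        (continuous_id.sub continuous_const))).rpow_const
        (fun x => Or.inl (ne_of_gt (Real.cosh_pos _)))
    have c2 : Continuous (fun s : ℝ => Real.cosh (α * (s - t2)) ^ (-(p / (p - 2)))) :=
      (Real.continuous_cosh.comp (continuous_const.mul
        (continuous_id.sub continuous_const))).rpow_const
        (fun x => Or.inl (ne_of_gt (Real.cosh_pos _)))
    exact continuous_const.mul (c1.mul c2)
  have hGint : Integrable G := by
    refine (hEint.const_mul (β ^ p * (2 ^ (p / (p - 2)) * 2 ^ (p / (p - 2))))).mono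
      hGcont.aestronglyMeasurable (ae_of_all _ fun s => ?_)
    rw [Real.norm_eq_abs, Real.norm_eq_abs, abs_of_nonneg (hGnonneg s),
      abs_of_nonneg (mul_nonneg hA (Real.exp_pos _).le)]
    exact hGup s
  have habs : |t1 - t2| = t2 - t1 := by
    rw [abs_sub_comm, abs_of_nonneg (by linarith)]
  rw [hFG]
  constructor
  · -- lower bound
    have hconst : ∀ s ∈ Icc t1 (t2 + 1),
        β ^ p * Real.exp (-k * ((t2 - t1) + 2)) ≤ G s := by
      intro s hs
      obtain ⟨hs1, hs2⟩ := hs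
      have hsum : |s - t1| + |s - t2| ≤ (t2 - t1) + 2 := by
        rcases le_total s t2 with hc | hc
        · rw [abs_of_nonneg (by linarith), abs_of_nonpos (by linarith)]; linarith
        · rw [abs_of_nonneg (by linarith), abs_of_nonneg (by linarith)]; linarith
      have hexp : Real.exp (-k * ((t2 - t1) + 2)) ≤ E s := by
        rw [hEdef]
        exact Real.exp_le_exp.2 (by nlinarith [hk0.le])
      calc β ^ p * Real.exp (-k * ((t2 - t1) + 2)) ≤ β ^ p * E s :=
            mul_le_mul_of_nonneg_left hexp (Real.rpow_nonneg hβ0.le _)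
        _ ≤ G s := hGlow s
    have hset := setIntegral_ge_of_const_le_real measurableSet_Icc
      (by rw [Real.volume_Icc]; exact ENNReal.ofReal_ne_top) hconst hGint.integrableOn
    rw [Real.volume_real_Icc_of_le (by linarith)] at hset
    have hle2 : ∫ s in Icc t1 (t2 + 1), G s ≤ ∫ s, G s :=
      setIntegral_le_integral hGint (ae_of_all _ hGnonneg)
    have heq : β ^ p * Real.exp (-(p * Real.sqrt Λ)) *
        ((|t1 - t2| + 1) * Real.exp (-k * |t1 - t2|))
        = β ^ p * Real.exp (-k * ((t2 - t1) + 2)) * (t2 + 1 - t1) := by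
      rw [habs]
      have : Real.exp (-(p * Real.sqrt Λ)) * Real.exp (-k * (t2 - t1))
          = Real.exp (-k * ((t2 - t1) + 2)) := by
        rw [← Real.exp_add]; congr 1; rw [hkdef]; ring
      rw [← this]; ring
    rw [heq]
    exact le_trans hset hle2
  · -- upper bound
    calc ∫ s, G s ≤ ∫ s, (β ^ p * (2 ^ (p / (p - 2)) * 2 ^ (p / (p - 2)))) * E s :=
          integral_mono hGint (hEint.const_mul _) hGup
      _ = (β ^ p * (2 ^ (p / (p - 2)) * 2 ^ (p / (p - 2)))) *
            ((t2 - t1 + 1/k) * Real.exp (-k * (t2 - t1))) := by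
          rw [MeasureTheory.integral_const_mul, hmodel.2]
      _ ≤ β ^ p * (2 ^ (p / (p - 2)) * 2 ^ (p / (p - 2))) * (1 + 1 / k) *
            ((|t1 - t2| + 1) * Real.exp (-k * |t1 - t2|)) := by
          rw [habs]
          have key : (t2 - t1) + 1/k ≤ (1 + 1/k) * ((t2 - t1) + 1) := by
            have h1 : (0:ℝ) ≤ t2 - t1 := by linarith
            have h2 : (0:ℝ) < 1/k := by positivity
            nlinarith
          calc (β ^ p * (2 ^ (p / (p - 2)) * 2 ^ (p / (p - 2)))) *
                ((t2 - t1 + 1/k) * Real.exp (-k * (t2 - t1)))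
              = ((β ^ p * (2 ^ (p / (p - 2)) * 2 ^ (p / (p - 2)))) *
                  Real.exp (-k * (t2 - t1))) * (t2 - t1 + 1/k) := by ring
            _ ≤ ((β ^ p * (2 ^ (p / (p - 2)) * 2 ^ (p / (p - 2)))) *
                  Real.exp (-k * (t2 - t1))) * ((1 + 1/k) * ((t2 - t1) + 1)) := by
                apply mul_le_mul_of_nonneg_left key
                exact mul_nonneg hA (Real.exp_pos _).le
            _ = β ^ p * (2 ^ (p / (p - 2)) * 2 ^ (p / (p - 2))) * (1 + 1 / k) *
                  ((t2 - t1 + 1) * Real.exp (-k * (t2 - t1))) := by ring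

end Helpers

/-- Interaction integral estimate (second part of Lemma 2.5, balanced case):
there are constants `c, C > 0`, depending only on `p` and `Λ`, such that for all
`t₁, t₂`, `∫ V_{t₁}^{p/2} V_{t₂}^{p/2} ≈ (|t₁-t₂|+1) e^{-(p√Λ/2)|t₁-t₂|}`. -/
theorem stmt_8 (p Λ α β : ℝ) (hp : 2 < p) (hΛ : 0 < Λ)
    (hα : α = (p - 2) / 2 * Real.sqrt Λ) (hβ : β = (p * Λ / 2) ^ ((1 : ℝ) / (p - 2)))
    (V : ℝ → ℝ → ℝ)
    (hV : ∀ t s, V t s = β * Real.cosh (α * (s - t)) ^ (-2 / (p - 2) : ℝ)) :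
    ∃ c C : ℝ, 0 < c ∧ 0 < C ∧
      ∀ t₁ t₂ : ℝ,
        c * ((|t₁ - t₂| + 1) * Real.exp (-(p * Real.sqrt Λ / 2) * |t₁ - t₂|))
          ≤ (∫ s : ℝ, V t₁ s ^ (p / 2) * V t₂ s ^ (p / 2)) ∧
        (∫ s : ℝ, V t₁ s ^ (p / 2) * V t₂ s ^ (p / 2))
          ≤ C * ((|t₁ - t₂| + 1) * Real.exp (-(p * Real.sqrt Λ / 2) * |t₁ - t₂|)) := by
  have hp2 : (0:ℝ) < p - 2 := by linarith
  have hppos : (0:ℝ) < p := by linarith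
  have hsΛ : 0 < Real.sqrt Λ := Real.sqrt_pos.2 hΛ
  have hβ0 : 0 < β := by
    rw [hβ]; exact Real.rpow_pos_of_pos (by positivity) _
  refine ⟨β ^ p * Real.exp (-(p * Real.sqrt Λ)),
    β ^ p * (2 ^ (p / (p - 2)) * 2 ^ (p / (p - 2))) * (1 + 1 / (p * Real.sqrt Λ / 2)),
    by positivity, by positivity, ?_⟩
  intro t₁ t₂
  rcases le_total t₁ t₂ with hle | hle
  · exact my_key p Λ α β hp hΛ hα hβ V hV hle
  · have hswap := my_key p Λ α β hp hΛ hα hβ V hV hle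
    have h1 : (fun s : ℝ => V t₁ s ^ (p / 2) * V t₂ s ^ (p / 2))
        = (fun s : ℝ => V t₂ s ^ (p / 2) * V t₁ s ^ (p / 2)) := by
      funext s; ring
    constructor
    · rw [abs_sub_comm t₁ t₂, h1]; exact hswap.1
    · rw [abs_sub_comm t₁ t₂, h1]; exact hswap.2
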